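/- Let n ≥ 2 and let H be a subgroup of ℤ^n that is invariant under the natural action of SL_n(ℤ) by matrix multiplication (i.e., g·h ∈ H for all g ∈ SL_n(ℤ), h ∈ H). Then H = d·ℤ^n for some integer d ≥ 0. -/

import Mathlib

open Matrix

/-- Every `SL_n(ℤ)`-invariant subgroup of `ℤⁿ` (for the action by matrix multiplication)
is of the form `d·ℤⁿ` for some integer `d ≥ 0`. -/
theorem invariant_subgroup_of_Zn_eq_dZn (n : ℕ) (hn : 2 ≤ n)
    (H : AddSubgroup (Fin n → ℤ))
    (hinv : ∀ g : Matrix.SpecialLinearGroup (Fin n) ℤ, ∀ v ∈ H, g.val.mulVec v ∈ H) :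
    ∃ d : ℤ, 0 ≤ d ∧ ∀ v : Fin n → ℤ, v ∈ H ↔ ∃ w : Fin n → ℤ, v = d • w := by
  classical
  haveI : NeZero n := ⟨by omega⟩
  set S : AddSubgroup ℤ := H.map (Pi.evalAddMonoidHom (fun _ : Fin n => ℤ) 0) with hSdef
  obtain ⟨d, hS⟩ := Int.subgroup_cyclic S
  have hmemS : ∀ x : ℤ, x ∈ S ↔ d ∣ x := by
    intro x
    rw [hS, AddSubgroup.mem_closure_singleton]
    constructor
    · rintro ⟨k, rfl⟩; exact Dvd.intro_left k (by simp [smul_eq_mul])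
    · rintro ⟨k, rfl⟩; exact ⟨k, by simp [smul_eq_mul, mul_comm]⟩
  -- transvections
  have htrans : ∀ (i j : Fin n), i ≠ j → ∀ c : ℤ, ∀ v ∈ H,
      v + Function.update (0 : Fin n → ℤ) i (c * v j) ∈ H := by
    intro i j hij c v hv
    have := hinv ⟨transvection i j c, det_transvection_of_ne i j hij c⟩ v hv
    simpa [transvection, add_mulVec, one_mulVec, single_mulVec] using this
  -- every coordinate of an element of H lies in S
  have hcoord : ∀ v ∈ H, ∀ i : Fin n, v i ∈ S := by
    intro v hv i
    by_cases h0 : i = 0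
    · subst h0; exact ⟨v, hv, rfl⟩
    · have h1 := htrans 0 i (Ne.symm h0) 1 v hv
      have m1 : v 0 + v i ∈ S := ⟨_, h1, by simp⟩
      have m2 : v 0 ∈ S := ⟨v, hv, rfl⟩
      simpa using S.sub_mem m1 m2
  -- the single vectors with entry d are in H
  have hsingle : ∀ i : Fin n, (fun k : Fin n => if k = i then d else (0:ℤ)) ∈ H := by
    have hd : d ∈ S := by rw [hmemS]
    obtain ⟨u, hu, hu0⟩ := hd
    have hu0 : u 0 = d := hu0
    by_cases hd0 : d = 0
    · have hzero : ∀ i : Fin n, (fun k : Fin n => if k = i then d else (0:ℤ)) = (0 : Fin n → ℤ) := by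
        intro i; funext k; simp [hd0]
      intro i; rw [hzero i]; exact H.zero_mem
    · -- each coordinate of u is divisible by d
      have hdvd : ∀ i, d ∣ u i := fun i => (hmemS _).1 (hcoord u hu i)
      set w : Fin n → ℤ := fun i => u i / d with hw
      have huw : ∀ i, u i = d * w i := fun i => (Int.mul_ediv_cancel' (hdvd i)).symm
      have hw0 : w 0 = 1 := by
        have := huw 0; rw [hu0] at this
        exact mul_left_cancel₀ hd0 (by rw [← this, mul_one])
      -- the matrix reducing u to d·e₀
      set g : Matrix (Fin n) (Fin n) ℤ := fun i k =>
        if i = 0 then (if k = 0 then 1 else 0)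
        else if k = i then 1 else if k = 0 then -w i else 0 with hg
      have hgdet : g.det = 1 := by
        have htri : g.BlockTriangular OrderDual.toDual := by
          intro i j hij
          have hij' : i < j := hij
          have hi : ¬ (j = 0) := by
            intro h; exact absurd (h ▸ hij') (by simp [Fin.not_lt, Fin.zero_le])
          by_cases h0 : i = 0 <;> simp [hg, h0, hi, hij'.ne']
        rw [det_of_lowerTriangular g htri]
        apply Finset.prod_eq_one
        intro i _
        by_cases h0 : i = 0 <;> simp [hg, h0]
      have hge : g.mulVec u = fun k => if k = 0 then d else 0 := by
        funext i
        by_cases h0 : i = 0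
        · subst h0
          simp only [mulVec, dotProduct, hg, if_pos rfl]
          rw [Finset.sum_eq_single (0 : Fin n)]
          · simp [hu0]
          · intro b _ hb; simp [hb]
          · intro h; exact absurd (Finset.mem_univ _) h
        · simp only [mulVec, dotProduct, hg, if_neg h0]
          have : ∀ k, (if k = i then (1:ℤ) else if k = 0 then -w i else 0) * u k
              = (if k = i then u i else 0) + (if k = 0 then -w i * d else 0) := by
            intro k
            by_cases hk : k = i
            · subst hk; simp [h0]
            · by_cases hk0 : k = 0 <;> simp [hk, hk0, hu0, Ne.symm h0]
          rw [Finset.sum_congr rfl (fun k _ => this k), Finset.sum_add_distrib]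
          simp [Finset.sum_ite_eq', huw i, h0]
          ring
      have he0 : (fun k => if k = 0 then d else (0:ℤ)) ∈ H := by
        rw [← hge]; exact hinv ⟨g, hgdet⟩ u hu
      intro i
      by_cases h0 : i = 0
      · subst h0; exact he0
      · have h1 := htrans i 0 h0 1 _ he0
        have h2 := H.sub_mem h1 he0
        have : (fun k => if k = 0 then d else (0:ℤ)) +
            Function.update (0 : Fin n → ℤ) i (1 * (if (0:Fin n) = 0 then d else 0))
            - (fun k => if k = 0 then d else (0:ℤ)) = fun k => if k = i then d else 0 := by
          funext k
          by_cases hk : k = i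
          · subst hk; simp [Function.update_apply, h0]
          · simp [Function.update_apply, hk]
        rwa [this] at h2
  -- every multiple of d in every coordinate lies in H
  have hback : ∀ w : Fin n → ℤ, d • w ∈ H := by
    intro w
    have : d • w = ∑ i : Fin n, w i • (fun k => if k = i then d else (0:ℤ)) := by
      funext j
      rw [Finset.sum_apply]
      simp only [Pi.smul_apply, smul_eq_mul, mul_ite, mul_zero]
      rw [Finset.sum_ite_eq]
      simp [mul_comm]
    rw [this]
    exact AddSubgroup.sum_mem H (fun i _ => AddSubgroup.zsmul_mem H (hsingle i) (w i))
  refine ⟨|d|, abs_nonneg d, fun v => ⟨fun hv => ?_, ?_⟩⟩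
  · have hdvd : ∀ i, d ∣ v i := fun i => (hmemS _).1 (hcoord v hv i)
    have hdvd' : ∀ i, |d| ∣ v i := fun i => (abs_dvd d (v i)).mpr (hdvd i)
    refine ⟨fun i => v i / |d|, funext fun i => ?_⟩
    simp only [Pi.smul_apply, smul_eq_mul]
    exact (Int.mul_ediv_cancel' (hdvd' i)).symm
  · rintro ⟨w, rfl⟩
    rcases abs_choice d with h | h
    · rw [h]; exact hback w
    · rw [h, neg_smul, ← smul_neg]; exact hback (-w)
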